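/- Let n ≥ 1 and let a weighted matrix digraph on vertices {0,1,…,n} be given by a finite arc type E with source map s and target map t as above. Let S ⊆ E be a subset of arcs with |S| = n such that every vertex i ∈ {1,…,n} is the target of exactly one arc of S. Form the n×n integer matrix M_S with rows indexed by {1,…,n} and columns indexed by S via the bijection e ↦ t(e), whose (i,e) entry is [t(e)=i] − [s(e)=i] (i.e. the incidence matrix with row 0 struck). If S contains no directed cycle, then det(M_S) = 1. -/

import Mathlib

attribute [local instance] Classical.propDecidable

/-- A directed cycle within the arc set `S`: a nonempty list of arcs `e₁,…,e_r` of `S` with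
`t eₖ = s eₖ₊₁` for `k < r` and `t e_r = s e₁`. -/
def HasCycleIn {V E : Type*} (s t : E → V) (S : Finset E) : Prop :=
  ∃ (l : List E) (hl : l ≠ []), (∀ e ∈ l, e ∈ S) ∧
    List.Chain' (fun e f => t e = s f) l ∧ t (l.getLast hl) = s (l.head hl)

lemma hasCycleIn_of_fun {V E : Type*} (s t : E → V) (S : Finset E) (f : ℕ → E) (r : ℕ)
    (hmem : ∀ k, f k ∈ S) (hchain : ∀ k < r, t (f k) = s (f (k + 1)))
    (hwrap : t (f r) = s (f 0)) : HasCycleIn s t S := by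
  refine ⟨(List.range (r + 1)).map f, by simp, ?_, ?_, ?_⟩
  · intro e he
    simp only [List.mem_map] at he
    obtain ⟨k, -, rfl⟩ := he
    exact hmem k
  · show List.IsChain _ _
    rw [List.isChain_map, List.isChain_range_succ]
    exact hchain
  · have hlen : ((List.range (r + 1)).map f).length = r + 1 := by simp
    have hlast : ((List.range (r + 1)).map f).getLast (by simp) =
        ((List.range (r + 1)).map f)[r] := by
      rw [List.getLast_eq_getElem]
      congr 1
      simp
    have hhead : ((List.range (r + 1)).map f).head (by simp) =
        ((List.range (r + 1)).map f)[0] := by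
      rw [List.head_eq_getElem]
    rw [hlast, hhead]
    simpa using hwrap

/-- If the `n`-arc subset `S` (with every vertex `1,…,n` the target of exactly
one arc of `S`) contains no directed cycle, then the incidence submatrix `M_S` (rows indexed by
vertices `1,…,n`, columns indexed by `S` via `e ↦ t e`) has determinant `1`. -/
theorem det_incidence_submatrix_eq_one_of_acyclic
    (n : ℕ) (hn : 1 ≤ n)
    (E : Type*) [Fintype E] [DecidableEq E]
    (s t : E → Fin (n + 1))
    (ht : ∀ e, t e ≠ 0) (hs : ∀ e, s e ≠ t e)
    (S : Finset E) (hcard : S.card = n)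
    (hone : ∀ i : Fin (n + 1), i ≠ 0 → ∃! e, e ∈ S ∧ t e = i)
    (φ : {e // e ∈ S} ≃ Fin n)
    (hφ : ∀ e : {e // e ∈ S}, t e.1 = (φ e).succ)
    (MS : Matrix (Fin n) (Fin n) ℤ)
    (hMS : ∀ i j, MS i j =
      (if t (φ.symm j).1 = i.succ then 1 else 0) - (if s (φ.symm j).1 = i.succ then 1 else 0))
    (hacyc : ¬ HasCycleIn s t S) :
    MS.det = 1 := by
  set e : Fin n → E := fun j => (φ.symm j).1 with he
  have hmemS : ∀ j, e j ∈ S := fun j => (φ.symm j).2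
  have hte : ∀ j, t (e j) = j.succ := fun j => by
    have := hφ (φ.symm j); rwa [Equiv.apply_symm_apply] at this
  set g : Fin n → Option (Fin n) :=
    fun j => if h : s (e j) = 0 then none else some ((s (e j)).pred h) with hgdef
  have hg : ∀ j i, g j = some i ↔ s (e j) = i.succ := by
    intro j i
    constructor
    · intro hh
      by_cases h : s (e j) = 0
      · simp only [hgdef, dif_pos h] at hh
        exact nomatch hh
      · simp only [hgdef, dif_neg h, Option.some_inj] at hh
        rw [← hh, Fin.succ_pred]
    · intro hh
      have h : s (e j) ≠ 0 := by rw [hh]; exact Fin.succ_ne_zero i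
      simp only [hgdef, dif_neg h, Option.some_inj]
      exact Fin.succ_injective _ ((Fin.succ_pred (s (e j)) h).trans hh)
  set N : Matrix (Fin n) (Fin n) ℤ :=
    Matrix.of (fun i j => if g j = some i then 1 else 0) with hN
  have hMS' : MS = 1 - N := by
    ext i j
    rw [hMS]
    simp only [Matrix.sub_apply, Matrix.one_apply, hN, Matrix.of_apply]
    congr 1
    · rw [hte j]
      by_cases hij : i = j
      · simp [hij]
      · rw [if_neg hij, if_neg (fun hh => hij (Fin.succ_injective n hh).symm)]
    · by_cases hh : s (e j) = i.succ
      · rw [if_pos hh, if_pos ((hg j i).2 hh)]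
      · rw [if_neg hh, if_neg (fun hc => hh ((hg j i).1 hc))]
  set F : Option (Fin n) → Option (Fin n) := fun o => o.bind g with hF
  have hFnone : ∀ m, F^[m] none = none := by
    intro m
    induction m with
    | zero => rfl
    | succ m ih => rw [Function.iterate_succ_apply, show F none = none from rfl, ih]
  have hpow : ∀ m i j, (N ^ m) i j = if F^[m] (some j) = some i then 1 else 0 := by
    intro m
    induction m with
    | zero =>
      intro i j
      simp only [pow_zero, Matrix.one_apply, Function.iterate_zero, id, Option.some_inj]
      by_cases hij : i = j
      · simp [hij]
      · rw [if_neg hij, if_neg (fun hh => hij hh.symm)]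
    | succ m ih =>
      intro i j
      rw [pow_succ, Matrix.mul_apply]
      have hstep : F^[m + 1] (some j) = F^[m] (g j) := by
        rw [Function.iterate_succ_apply]; rfl
      cases hj : g j with
      | none =>
        rw [hstep, hj, hFnone]
        rw [Finset.sum_eq_zero, if_neg (by simp)]
        intro k _
        rw [hN]
        simp [hj]
      | some k₀ =>
        rw [hstep, hj, Finset.sum_eq_single k₀]
        · rw [ih]
          have hone' : N k₀ j = 1 := by rw [hN]; simp [hj]
          rw [hone', mul_one]
        · intro k _ hk
          have hzero : N k j = 0 := by
            rw [hN]
            simp only [Matrix.of_apply, hj, Option.some_inj]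
            rw [if_neg (fun hh => hk hh.symm)]
          rw [hzero, mul_zero]
        · intro hk; exact absurd (Finset.mem_univ k₀) hk
  -- no cycles in the functional graph g
  have hnocyc : ∀ (v : Fin n) (r : ℕ), F^[r + 1] (some v) = some v → False := by
    intro v r hr
    set c : ℕ → Fin n := fun k => (F^[k] (some v)).getD v with hc
    have hsome : ∀ k ≤ r + 1, F^[k] (some v) = some (c k) := by
      intro k hk
      cases hck : F^[k] (some v) with
      | some w => simp [hc, hck]
      | none =>
        exfalso
        have hrk : r + 1 = (r + 1 - k) + k := by omega
        rw [hrk, Function.iterate_add_apply, hck, hFnone] at hr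
        exact nomatch hr
    have hstep : ∀ k ≤ r, g (c k) = some (c (k + 1)) := by
      intro k hk
      have h1 := hsome k (by omega)
      have h2 := hsome (k + 1) (by omega)
      rw [Function.iterate_succ_apply', h1] at h2
      exact h2
    have hc0 : c 0 = v := by simp [hc]
    have hcr : c (r + 1) = v := by simp [hc, hr]
    apply hacyc
    apply hasCycleIn_of_fun s t S (fun k => e (c (r - k))) r
    · intro k; exact hmemS _
    · intro k hk
      have hkk : r - k - 1 ≤ r := by omega
      have h := (hg _ _).1 (hstep (r - k - 1) hkk)
      have hrk : r - k - 1 + 1 = r - k := by omega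
      rw [hrk] at h
      have hrk2 : r - (k + 1) = r - k - 1 := by omega
      rw [hte (c (r - k)), hrk2, h]
    · have h := (hg _ _).1 (hstep r le_rfl)
      rw [hcr] at h
      simp only [Nat.sub_self, Nat.sub_zero]
      rw [hte (c 0), hc0, h]
  -- N is nilpotent
  have hFn : ∀ j : Fin n, F^[n] (some j) = none := by
    intro j
    cases hfn : F^[n] (some j) with
    | none => rfl
    | some i =>
      exfalso
      set c : ℕ → Fin n := fun k => (F^[k] (some j)).getD j with hc
      have hsome : ∀ k ≤ n, F^[k] (some j) = some (c k) := by
        intro k hk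
        cases hck : F^[k] (some j) with
        | some w => simp [hc, hck]
        | none =>
          exfalso
          have hrk : n = (n - k) + k := by omega
          have h3 : F^[(n - k) + k] (some j) = none := by
            rw [Function.iterate_add_apply, hck, hFnone]
          rw [← hrk] at h3
          rw [hfn] at h3
          exact nomatch h3
      have hninj : ¬ Function.Injective (fun k : Fin (n + 1) => c k.1) := by
        intro hinj
        have := Fintype.card_le_of_injective _ hinj
        simp at this
      rw [Function.Injective] at hninj
      push_neg at hninj
      obtain ⟨a, b, hab, hne⟩ := hninj
      rcases lt_or_gt_of_ne (fun hh : a.1 = b.1 => hne (Fin.ext hh)) with hlt | hlt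
      case _ =>
        have h1 := hsome a.1 (by omega)
        have h2 := hsome b.1 (by omega)
        have hcyc : F^[b.1 - a.1] (some (c a.1)) = some (c a.1) := by
          have hb : b.1 = (b.1 - a.1) + a.1 := by omega
          rw [← h1, ← Function.iterate_add_apply, ← hb, h2, ← hab]
          exact h1.symm
        have hpos : b.1 - a.1 = (b.1 - a.1 - 1) + 1 := by omega
        rw [hpos] at hcyc
        exact hnocyc _ _ hcyc
      case _ =>
        have h1 := hsome b.1 (by omega)
        have h2 := hsome a.1 (by omega)
        have hcyc : F^[a.1 - b.1] (some (c b.1)) = some (c b.1) := by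
          have hb : a.1 = (a.1 - b.1) + b.1 := by omega
          rw [← h1, ← Function.iterate_add_apply, ← hb, h2, hab]
          exact h1.symm
        have hpos : a.1 - b.1 = (a.1 - b.1 - 1) + 1 := by omega
        rw [hpos] at hcyc
        exact hnocyc _ _ hcyc
  have hNn : N ^ n = 0 := by
    ext i j
    rw [hpow, hFn]
    simp
  have hnil : IsNilpotent N := ⟨n, hNn⟩
  have hcp : N.charpoly = Polynomial.X ^ n := by
    have h := Matrix.isNilpotent_charpoly_sub_pow_of_isNilpotent hnil
    have h0 : N.charpoly - Polynomial.X ^ (Fintype.card (Fin n)) = 0 := h.eq_zero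
    rw [Fintype.card_fin, sub_eq_zero] at h0
    exact h0
  rw [hMS']
  have hdet : ((1 : Matrix (Fin n) (Fin n) ℤ) - N).det = Polynomial.eval (1 : ℤ) N.charpoly := by
    rw [Matrix.charpoly, eval_det, Matrix.matPolyEquiv_charmatrix]
    simp
  rw [hdet, hcp]
  simp
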